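/- Proposition 1 (Crocco-type theorem for Korteweg fluids): For a steady non-isentropic flow of a Korteweg fluid satisfying the steady momentum balance ρ (Dv)v = div T with T = −p̄ I − T^E, the following pointwise relation holds throughout B: ω × v = ϑ grad η − grad h − grad(ι² div(ρ ∂_gφ) + ∂_gφ·grad ι) + ι grad(v·grad Π − ∂_ιχ). -/

import Mathlib

noncomputable section

/-- Points of ℝ³. -/
abbrev V3 : Type := Fin 3 → ℝ

/-- Partial derivative ∂ᵢ of a scalar field on ℝ³. -/
def pd (i : Fin 3) (f : V3 → ℝ) (x : V3) : ℝ :=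
  fderiv ℝ f x (Pi.single i 1)

/-- Cross product on ℝ³. -/
def cross (a b : V3) : V3 :=
  ![a 1 * b 2 - a 2 * b 1,
    a 2 * b 0 - a 0 * b 2,
    a 0 * b 1 - a 1 * b 0]

/-- Curl of a vector field on ℝ³. -/
def curl (u : V3 → V3) (x : V3) : V3 :=
  ![pd 1 (fun y => u y 2) x - pd 2 (fun y => u y 1) x,
    pd 2 (fun y => u y 0) x - pd 0 (fun y => u y 2) x,
    pd 0 (fun y => u y 1) x - pd 1 (fun y => u y 0) x]

/-- A steady Korteweg fluid on an open set `B ⊆ ℝ³`: smooth fields `ρ > 0`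
(mass density), `η` (entropy), `v` (velocity), a smooth potential
`φ = φ(ι, g, η)` and a smooth kinetic co-energy `χ = χ(ι, ι̇)`. -/
structure KortewegFluid where
  B : Set V3
  hB : IsOpen B
  ρ : V3 → ℝ
  η : V3 → ℝ
  v : V3 → V3
  φ : ℝ × V3 × ℝ → ℝ
  χ : ℝ × ℝ → ℝ
  hρ : ContDiffOn ℝ (⊤ : ℕ∞) ρ B
  hη : ContDiffOn ℝ (⊤ : ℕ∞) η B
  hv : ContDiffOn ℝ (⊤ : ℕ∞) v B
  hφ : ContDiff ℝ (⊤ : ℕ∞) φ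
  hχ : ContDiff ℝ (⊤ : ℕ∞) χ
  hρpos : ∀ x ∈ B, 0 < ρ x

namespace KortewegFluid

variable (K : KortewegFluid)

/-- Specific volume `ι = 1/ρ`. -/
def ι (x : V3) : ℝ := (K.ρ x)⁻¹

/-- The point `(ι(x), grad ι(x), η(x))` at which `φ` and its partial
derivatives are evaluated. -/
def pt (x : V3) : ℝ × V3 × ℝ := (K.ι x, fun i => pd i K.ι x, K.η x)

/-- `∂_ιφ` evaluated along the fields. -/
def dφι (x : V3) : ℝ := fderiv ℝ K.φ (K.pt x) (1, 0, 0)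

/-- `∂_gφ` (vector of partial derivatives of `φ` w.r.t. the gradient slot)
evaluated along the fields. -/
def dφg (x : V3) : V3 := fun j => fderiv ℝ K.φ (K.pt x) (0, Pi.single j 1, 0)

/-- Temperature `ϑ = ∂_ηφ` evaluated along the fields. -/
def temp (x : V3) : ℝ := fderiv ℝ K.φ (K.pt x) (0, 0, 1)

/-- Convective rate `ι̇ = v · grad ι`. -/
def ιdot (x : V3) : ℝ := ∑ j, K.v x j * pd j K.ι x

/-- `∂_ιχ` evaluated along the fields. -/
def dχι (x : V3) : ℝ := fderiv ℝ K.χ (K.ι x, K.ιdot x) (1, 0)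

/-- The field `Π : x ↦ ∂_ι̇χ(ι(x), ι̇(x))`. -/
def Pi' (x : V3) : ℝ := fderiv ℝ K.χ (K.ι x, K.ιdot x) (0, 1)

/-- `div(ρ ∂_gφ)`. -/
def divρg (x : V3) : ℝ := ∑ j, pd j (fun y => K.ρ y * K.dφg y j) x

/-- Kinetic pressure `p̌ = ρι (v·grad Π) − ∂_ιχ`. -/
def pcheck (x : V3) : ℝ :=
  K.ρ x * K.ι x * (∑ j, K.v x j * pd j K.Pi' x) - K.dχι x

/-- Pressure `p̄ = −ρι ∂_ιφ + ι div(ρ ∂_gφ) − p̌`. -/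
def pbar (x : V3) : ℝ :=
  -(K.ρ x * K.ι x * K.dφι x) + K.ι x * K.divρg x - K.pcheck x

/-- Specific enthalpy `ξ = φ − ι ∂_ιφ − ∂_gφ · grad ι`. -/
def ξ (x : V3) : ℝ :=
  K.φ (K.pt x) - K.ι x * K.dφι x - ∑ j, K.dφg x j * pd j K.ι x

/-- Total enthalpy `h = (1/2)|v|² + ξ`. -/
def htot (x : V3) : ℝ := (1 / 2) * (∑ k, (K.v x k) ^ 2) + K.ξ x

/-- Korteweg stress `T^E = grad ι ⊗ ρ ∂_gφ`. -/
def TE (x : V3) (i j : Fin 3) : ℝ := pd i K.ι x * (K.ρ x * K.dφg x j)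

/-- Steady momentum balance `ρ (Dv)v = div T` with `T = −p̄ I − T^E`
(stated componentwise). -/
def MomentumBalance : Prop :=
  ∀ x ∈ K.B, ∀ i : Fin 3,
    K.ρ x * ∑ j, pd j (fun y => K.v y i) x * K.v x j
      = ∑ j, pd j (fun y => -(K.pbar y) * (if i = j then (1:ℝ) else 0) - K.TE y i j) x

end KortewegFluid

section Helpers

lemma one_le_inf : (1 : WithTop ℕ∞) ≤ ((⊤:ℕ∞) : WithTop ℕ∞) := by decide
lemma two_le_inf : (2 : WithTop ℕ∞) ≤ ((⊤:ℕ∞) : WithTop ℕ∞) := by decide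

lemma cdat_pd {f : V3 → ℝ} {x : V3} (h : ContDiffAt ℝ (⊤:ℕ∞) f x) (j : Fin 3) :
    ContDiffAt ℝ (⊤:ℕ∞) (fun y => pd j f y) x := by
  have h1 : ContDiffAt ℝ (⊤:ℕ∞) (fderiv ℝ f) x := h.fderiv_right (by simp)
  exact h1.clm_apply contDiffAt_const

lemma pd_hasFDerivAt {f : V3 → ℝ} {L : V3 →L[ℝ] ℝ} {x : V3} (h : HasFDerivAt f L x) (i : Fin 3) :
    pd i f x = L (Pi.single i 1) := by unfold pd; rw [h.fderiv]

lemma pd_add {f g : V3 → ℝ} {x : V3} (hf : DifferentiableAt ℝ f x)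
    (hg : DifferentiableAt ℝ g x) (i : Fin 3) :
    pd i (fun y => f y + g y) x = pd i f x + pd i g x := by
  unfold pd; rw [fderiv_fun_add hf hg]; rfl

lemma pd_sub {f g : V3 → ℝ} {x : V3} (hf : DifferentiableAt ℝ f x)
    (hg : DifferentiableAt ℝ g x) (i : Fin 3) :
    pd i (fun y => f y - g y) x = pd i f x - pd i g x := by
  unfold pd; rw [fderiv_fun_sub hf hg]; rfl

lemma pd_mul {f g : V3 → ℝ} {x : V3} (hf : DifferentiableAt ℝ f x)
    (hg : DifferentiableAt ℝ g x) (i : Fin 3) :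
    pd i (fun y => f y * g y) x = f x * pd i g x + pd i f x * g x := by
  unfold pd; rw [fderiv_fun_mul hf hg]; simp [mul_comm]

lemma pd_const_mul {f : V3 → ℝ} {x : V3} (hf : DifferentiableAt ℝ f x) (c : ℝ) (i : Fin 3) :
    pd i (fun y => c * f y) x = c * pd i f x := by
  unfold pd; rw [fderiv_const_mul hf]; simp

lemma pd_neg_mul_const {f : V3 → ℝ} {x : V3} (hf : DifferentiableAt ℝ f x) (c : ℝ) (i : Fin 3) :
    pd i (fun y => -(f y) * c) x = -(pd i f x) * c := by
  have e : (fun y => -(f y) * c) = fun y => (-c) * f y := by funext y; ring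
  rw [e, pd_const_mul hf (-c) i]; ring

lemma pd_sq {f : V3 → ℝ} {x : V3} (hf : DifferentiableAt ℝ f x) (i : Fin 3) :
    pd i (fun y => (f y)^2) x = 2 * (f x * pd i f x) := by
  have e : (fun y => (f y)^2) = fun y => f y * f y := by funext y; ring
  rw [e, pd_mul hf hf i]; ring

lemma pd_neg {f : V3 → ℝ} {x : V3} (i : Fin 3) :
    pd i (fun y => -(f y)) x = -(pd i f x) := by
  unfold pd; rw [fderiv_fun_neg]; simp

lemma pd_sum {f : Fin 3 → V3 → ℝ} {x : V3} (hf : ∀ j, DifferentiableAt ℝ (f j) x) (i : Fin 3) :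
    pd i (fun y => ∑ j, f j y) x = ∑ j, pd i (f j) x := by
  unfold pd; rw [fderiv_fun_sum (fun j _ => hf j)]; simp

lemma pd_congr {f g : V3 → ℝ} {x : V3} (h : f =ᶠ[nhds x] g) (i : Fin 3) :
    pd i f x = pd i g x := by unfold pd; rw [h.fderiv_eq]

lemma pd_comm {u : V3 → ℝ} {x : V3} (hu : ContDiffAt ℝ (⊤:ℕ∞) u x) (i j : Fin 3) :
    pd i (fun y => pd j u y) x = pd j (fun y => pd i u y) x := by
  have hsym : IsSymmSndFDerivAt ℝ u x := hu.isSymmSndFDerivAt (by rw [minSmoothness_of_isRCLikeNormedField]; exact two_le_inf)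
  have hd : DifferentiableAt ℝ (fderiv ℝ u) x :=
    (hu.fderiv_right (m := (⊤:ℕ∞)) (by simp)).differentiableAt (by simp)
  have key : ∀ a b : Fin 3, pd a (fun y => pd b u y) x
      = fderiv ℝ (fderiv ℝ u) x (Pi.single a 1) (Pi.single b 1) := by
    intro a b
    show fderiv ℝ (fun y => (fderiv ℝ u y) (Pi.single b 1)) x (Pi.single a 1) = _
    rw [fderiv_clm_apply hd (differentiableAt_const _)]
    simp
  rw [key, key, hsym]

lemma grad_hasFDerivAt {u : V3 → ℝ} {x : V3} (hu : ContDiffAt ℝ (⊤:ℕ∞) u x) :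
    HasFDerivAt (fun y => (fun j => pd j u y))
      (ContinuousLinearMap.pi (fun j => fderiv ℝ (fun y => pd j u y) x)) x := by
  have hdiff : ∀ j, DifferentiableAt ℝ (fun y => pd j u y) x :=
    fun j => (cdat_pd hu j).differentiableAt (by simp)
  have h2 : DifferentiableAt ℝ (fun y => (fun j => pd j u y)) x := differentiableAt_pi.2 hdiff
  have h := h2.hasFDerivAt
  rwa [fderiv_pi hdiff] at h

lemma vec_decomp (b : V3) : b = ∑ j, b j • (Pi.single j (1:ℝ) : V3) := by
  funext k
  rw [Finset.sum_apply]
  simp [Pi.single_apply, Fin.sum_univ_three]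

lemma clm3 (L : ℝ × V3 × ℝ →L[ℝ] ℝ) (a : ℝ) (b : V3) (c : ℝ) :
    L (a, b, c) = a * L (1,0,0) + (∑ j, b j * L (0, Pi.single j 1, 0)) + c * L (0,0,1) := by
  have hb : ((a, b, c) : ℝ × V3 × ℝ)
      = a • ((1:ℝ),(0:V3),(0:ℝ)) + (∑ j, b j • ((0:ℝ), (Pi.single j 1 : V3), (0:ℝ)))
        + c • ((0:ℝ),(0:V3),(1:ℝ)) := by
    refine Prod.ext ?_ (Prod.ext ?_ ?_) <;>
      simp [Prod.fst_sum, Prod.snd_sum, Fin.sum_univ_three]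
    have := vec_decomp b
    rw [Fin.sum_univ_three] at this
    exact this
  rw [hb, map_add, map_add, map_smul, map_smul, map_sum]
  simp only [map_smul, smul_eq_mul]

end Helpers


/-- Proposition 1, Crocco-type theorem for Korteweg fluids:
for a steady non-isentropic flow of a Korteweg fluid satisfying the steady
momentum balance `ρ (Dv)v = div T`, `T = −p̄ I − T^E`, at every point of `B`
(componentwise):
`ω × v = ϑ grad η − grad h − grad(ι² div(ρ ∂_gφ) + ∂_gφ·grad ι)`
`        + ι grad(v·grad Π − ∂_ιχ)`. -/
theorem korteweg_crocco (K : KortewegFluid) (hbal : K.MomentumBalance) :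
    ∀ x ∈ K.B, ∀ i : Fin 3,
      cross (curl K.v x) (K.v x) i
        = K.temp x * pd i K.η x
          - pd i K.htot x
          - pd i (fun y => (K.ι y) ^ 2 * K.divρg y + ∑ j, K.dφg y j * pd j K.ι y) x
          + K.ι x * pd i (fun y => (∑ j, K.v y j * pd j K.Pi' y) - K.dχι y) x := by
  intro x hx i
  have hmem := K.hB.mem_nhds hx
  have hρ0 : K.ρ x ≠ 0 := ne_of_gt (K.hρpos x hx)
  -- smoothness of all the basic and derived fields at x
  have cρ : ContDiffAt ℝ (⊤:ℕ∞) K.ρ x := K.hρ.contDiffAt hmem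
  have cη : ContDiffAt ℝ (⊤:ℕ∞) K.η x := K.hη.contDiffAt hmem
  have cv : ContDiffAt ℝ (⊤:ℕ∞) K.v x := K.hv.contDiffAt hmem
  have cvk : ∀ k : Fin 3, ContDiffAt ℝ (⊤:ℕ∞) (fun y => K.v y k) x :=
    fun k => contDiffAt_pi.1 cv k
  have cι : ContDiffAt ℝ (⊤:ℕ∞) K.ι x := cρ.inv hρ0
  have cgι : ∀ j : Fin 3, ContDiffAt ℝ (⊤:ℕ∞) (fun y => pd j K.ι y) x := fun j => cdat_pd cι j
  have cΓ : ContDiffAt ℝ (⊤:ℕ∞) (fun y => (fun j => pd j K.ι y)) x := contDiffAt_pi.2 cgι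
  have cpt : ContDiffAt ℝ (⊤:ℕ∞) K.pt x := cι.prodMk (cΓ.prodMk cη)
  have cdφι : ContDiffAt ℝ (⊤:ℕ∞) K.dφι x :=
    (((K.hφ.fderiv_right (by simp)).contDiffAt).comp x cpt).clm_apply contDiffAt_const
  have cdφg : ∀ j : Fin 3, ContDiffAt ℝ (⊤:ℕ∞) (fun y => K.dφg y j) x := fun j =>
    (((K.hφ.fderiv_right (by simp)).contDiffAt).comp x cpt).clm_apply contDiffAt_const
  have cιdot : ContDiffAt ℝ (⊤:ℕ∞) K.ιdot x := ContDiffAt.sum (fun j _ => (cvk j).mul (cgι j))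
  have cχpt : ContDiffAt ℝ (⊤:ℕ∞) (fun y => (K.ι y, K.ιdot y)) x := cι.prodMk cιdot
  have cPi : ContDiffAt ℝ (⊤:ℕ∞) K.Pi' x :=
    (((K.hχ.fderiv_right (by simp)).contDiffAt).comp x cχpt).clm_apply contDiffAt_const
  have cdχι : ContDiffAt ℝ (⊤:ℕ∞) K.dχι x :=
    (((K.hχ.fderiv_right (by simp)).contDiffAt).comp x cχpt).clm_apply contDiffAt_const
  have cgP : ∀ j : Fin 3, ContDiffAt ℝ (⊤:ℕ∞) (fun y => pd j K.Pi' y) x := fun j => cdat_pd cPi j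
  have cS : ContDiffAt ℝ (⊤:ℕ∞) (fun y => ∑ j, K.v y j * pd j K.Pi' y) x :=
    ContDiffAt.sum (fun j _ => (cvk j).mul (cgP j))
  have cQ : ContDiffAt ℝ (⊤:ℕ∞) (fun y => (∑ j, K.v y j * pd j K.Pi' y) - K.dχι y) x :=
    cS.sub cdχι
  have cρφg : ∀ j : Fin 3, ContDiffAt ℝ (⊤:ℕ∞) (fun y => K.ρ y * K.dφg y j) x :=
    fun j => cρ.mul (cdφg j)
  have cdiv : ContDiffAt ℝ (⊤:ℕ∞) K.divρg x :=
    ContDiffAt.sum (fun j _ => cdat_pd (cρφg j) j)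
  have cφpt : ContDiffAt ℝ (⊤:ℕ∞) (fun y => K.φ (K.pt y)) x := (K.hφ.contDiffAt).comp x cpt
  have cξ : ContDiffAt ℝ (⊤:ℕ∞) K.ξ x :=
    (cφpt.sub (cι.mul cdφι)).sub (ContDiffAt.sum (fun j _ => (cdφg j).mul (cgι j)))
  have cpch : ContDiffAt ℝ (⊤:ℕ∞) K.pcheck x := ((cρ.mul cι).mul cS).sub cdχι
  have cpbar : ContDiffAt ℝ (⊤:ℕ∞) K.pbar x :=
    ((((cρ.mul cι).mul cdφι)).neg.add (cι.mul cdiv)).sub cpch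
  have D : ∀ {f : V3 → ℝ}, ContDiffAt ℝ (⊤:ℕ∞) f x → DifferentiableAt ℝ f x :=
    fun h => h.differentiableAt (by simp)
  -- arithmetic facts
  have hι1 : K.ρ x * K.ι x = 1 := mul_inv_cancel₀ hρ0
  have hs0 : pd i (fun y => pd 0 K.ι y) x = pd 0 (fun y => pd i K.ι y) x := pd_comm cι i 0
  have hs1 : pd i (fun y => pd 1 K.ι y) x = pd 1 (fun y => pd i K.ι y) x := pd_comm cι i 1
  have hs2 : pd i (fun y => pd 2 K.ι y) x = pd 2 (fun y => pd i K.ι y) x := pd_comm cι i 2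
  have hdiv3 : K.divρg x = pd 0 (fun y => K.ρ y * K.dφg y 0) x
      + pd 1 (fun y => K.ρ y * K.dφg y 1) x + pd 2 (fun y => K.ρ y * K.dφg y 2) x := by
    show (∑ j, pd j (fun y => K.ρ y * K.dφg y j) x) = _
    rw [Fin.sum_univ_three]
  -- chain rule for φ ∘ pt
  have hptd : HasFDerivAt K.pt
      ((fderiv ℝ K.ι x).prod ((ContinuousLinearMap.pi
        (fun j => fderiv ℝ (fun y => pd j K.ι y) x)).prod (fderiv ℝ K.η x))) x :=
    (D cι).hasFDerivAt.prodMk ((grad_hasFDerivAt cι).prodMk (D cη).hasFDerivAt)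
  have hφd : HasFDerivAt K.φ (fderiv ℝ K.φ (K.pt x)) (K.pt x) :=
    ((K.hφ.differentiable (by simp)) (K.pt x)).hasFDerivAt
  have C1 : pd i (fun y => K.φ (K.pt y)) x
      = pd i K.ι x * K.dφι x + (∑ j, pd i (fun y => pd j K.ι y) x * K.dφg x j)
        + pd i K.η x * K.temp x := by
    have h3 : pd i (fun y => K.φ (K.pt y)) x
        = (fderiv ℝ K.φ (K.pt x)) ((pd i K.ι x,
            (fun j => pd i (fun y => pd j K.ι y) x : V3), pd i K.η x)) :=
      pd_hasFDerivAt (hφd.comp x hptd) i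
    rw [h3, clm3]
    rfl
  -- enthalpy
  have E1 : pd i K.htot x
      = (1/2) * (∑ k, 2 * (K.v x k * pd i (fun y => K.v y k) x)) + pd i K.ξ x := by
    have a1 : pd i K.htot x
        = pd i (fun y => (1/2) * (∑ k, (K.v y k)^2)) x + pd i K.ξ x :=
      pd_add ((D (ContDiffAt.sum (fun k _ => (cvk k).pow 2))).const_mul _) (D cξ) i
    have a2 : pd i (fun y => (1/2) * (∑ k, (K.v y k)^2)) x
        = (1/2) * pd i (fun y => ∑ k, (K.v y k)^2) x :=
      pd_const_mul (D (ContDiffAt.sum (fun k _ => (cvk k).pow 2))) _ i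
    have a3 : pd i (fun y => ∑ k, (K.v y k)^2) x = ∑ k, pd i (fun y => (K.v y k)^2) x :=
      pd_sum (fun k => D ((cvk k).pow 2)) i
    have a4 : ∀ k : Fin 3, pd i (fun y => (K.v y k)^2) x
        = 2 * (K.v x k * pd i (fun y => K.v y k) x) := fun k => pd_sq (D (cvk k)) i
    rw [a1, a2, a3]; simp only [a4]
  -- specific enthalpy
  have E2 : pd i K.ξ x
      = pd i (fun y => K.φ (K.pt y)) x - (K.ι x * pd i K.dφι x + pd i K.ι x * K.dφι x)
        - (∑ j, (K.dφg x j * pd i (fun y => pd j K.ι y) x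
            + pd i (fun y => K.dφg y j) x * pd j K.ι x)) := by
    have a1 : pd i K.ξ x = pd i (fun y => K.φ (K.pt y) - K.ι y * K.dφι y) x
        - pd i (fun y => ∑ j, K.dφg y j * pd j K.ι y) x :=
      pd_sub (D (cφpt.sub (cι.mul cdφι)))
        (D (ContDiffAt.sum (fun j _ => (cdφg j).mul (cgι j)))) i
    have a2 : pd i (fun y => K.φ (K.pt y) - K.ι y * K.dφι y) x
        = pd i (fun y => K.φ (K.pt y)) x - pd i (fun y => K.ι y * K.dφι y) x :=
      pd_sub (D cφpt) (D (cι.mul cdφι)) i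
    have a3 : pd i (fun y => K.ι y * K.dφι y) x
        = K.ι x * pd i K.dφι x + pd i K.ι x * K.dφι x := pd_mul (D cι) (D cdφι) i
    have a4 : pd i (fun y => ∑ j, K.dφg y j * pd j K.ι y) x
        = ∑ j, pd i (fun y => K.dφg y j * pd j K.ι y) x :=
      pd_sum (fun j => D ((cdφg j).mul (cgι j))) i
    have a5 : ∀ j : Fin 3, pd i (fun y => K.dφg y j * pd j K.ι y) x
        = K.dφg x j * pd i (fun y => pd j K.ι y) x + pd i (fun y => K.dφg y j) x * pd j K.ι x :=
      fun j => pd_mul (D (cdφg j)) (D (cgι j)) i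
    rw [a1, a2, a3, a4]; simp only [a5]
  -- third gradient term of the statement
  have E3 : pd i (fun y => (K.ι y) ^ 2 * K.divρg y + ∑ j, K.dφg y j * pd j K.ι y) x
      = ((K.ι x)^2 * pd i K.divρg x + 2 * (K.ι x * pd i K.ι x) * K.divρg x)
        + (∑ j, (K.dφg x j * pd i (fun y => pd j K.ι y) x
            + pd i (fun y => K.dφg y j) x * pd j K.ι x)) := by
    have a1 : pd i (fun y => (K.ι y) ^ 2 * K.divρg y + ∑ j, K.dφg y j * pd j K.ι y) x
        = pd i (fun y => (K.ι y)^2 * K.divρg y) x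
          + pd i (fun y => ∑ j, K.dφg y j * pd j K.ι y) x :=
      pd_add (D ((cι.pow 2).mul cdiv))
        (D (ContDiffAt.sum (fun j _ => (cdφg j).mul (cgι j)))) i
    have a2 : pd i (fun y => (K.ι y)^2 * K.divρg y) x
        = (K.ι x)^2 * pd i K.divρg x + pd i (fun y => (K.ι y)^2) x * K.divρg x :=
      pd_mul (D (cι.pow 2)) (D cdiv) i
    have a3 : pd i (fun y => (K.ι y)^2) x = 2 * (K.ι x * pd i K.ι x) := pd_sq (D cι) i
    have a4 : pd i (fun y => ∑ j, K.dφg y j * pd j K.ι y) x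
        = ∑ j, pd i (fun y => K.dφg y j * pd j K.ι y) x :=
      pd_sum (fun j => D ((cdφg j).mul (cgι j))) i
    have a5 : ∀ j : Fin 3, pd i (fun y => K.dφg y j * pd j K.ι y) x
        = K.dφg x j * pd i (fun y => pd j K.ι y) x + pd i (fun y => K.dφg y j) x * pd j K.ι x :=
      fun j => pd_mul (D (cdφg j)) (D (cgι j)) i
    rw [a1, a2, a3, a4]; simp only [a5]
  -- pressure gradient, using ρ ι = 1 near x
  have hne : ∀ᶠ y in nhds x, K.ρ y ≠ 0 := cρ.continuousAt.eventually_ne hρ0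
  have hev : K.pbar =ᶠ[nhds x] (fun y => -(K.dφι y) + K.ι y * K.divρg y
      - ((∑ j, K.v y j * pd j K.Pi' y) - K.dχι y)) := by
    filter_upwards [hne] with y hy
    have h1 : K.ρ y * K.ι y = 1 := mul_inv_cancel₀ hy
    show -(K.ρ y * K.ι y * K.dφι y) + K.ι y * K.divρg y
        - (K.ρ y * K.ι y * (∑ j, K.v y j * pd j K.Pi' y) - K.dχι y) = _
    rw [h1]; ring
  have E4 : pd i K.pbar x
      = -(pd i K.dφι x) + (K.ι x * pd i K.divρg x + pd i K.ι x * K.divρg x)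
        - pd i (fun y => (∑ j, K.v y j * pd j K.Pi' y) - K.dχι y) x := by
    rw [pd_congr hev i]
    have a1 : pd i (fun y => -(K.dφι y) + K.ι y * K.divρg y
          - ((∑ j, K.v y j * pd j K.Pi' y) - K.dχι y)) x
        = pd i (fun y => -(K.dφι y) + K.ι y * K.divρg y) x
          - pd i (fun y => (∑ j, K.v y j * pd j K.Pi' y) - K.dχι y) x :=
      pd_sub (D (cdφι.neg.add (cι.mul cdiv))) (D cQ) i
    have a2 : pd i (fun y => -(K.dφι y) + K.ι y * K.divρg y) x
        = pd i (fun y => -(K.dφι y)) x + pd i (fun y => K.ι y * K.divρg y) x :=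
      pd_add (D cdφι.neg) (D (cι.mul cdiv)) i
    have a3 : pd i (fun y => -(K.dφι y)) x = -(pd i K.dφι x) := pd_neg i
    have a4 : pd i (fun y => K.ι y * K.divρg y) x
        = K.ι x * pd i K.divρg x + pd i K.ι x * K.divρg x := pd_mul (D cι) (D cdiv) i
    rw [a1, a2, a3, a4]
  -- the cross-product identity
  have EC : cross (curl K.v x) (K.v x) i
      = (∑ j, pd j (fun y => K.v y i) x * K.v x j)
        - ∑ j, K.v x j * pd i (fun y => K.v y j) x := by
    fin_cases i <;> simp [cross, curl, Fin.sum_univ_three] <;> ring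
  -- momentum balance, componentwise
  have Emom := hbal x hx i
  have M1 : ∀ j : Fin 3,
      pd j (fun y => -(K.pbar y) * (if i = j then (1:ℝ) else 0) - K.TE y i j) x
      = -(pd j K.pbar x) * (if i = j then (1:ℝ) else 0)
        - (pd i K.ι x * pd j (fun y => K.ρ y * K.dφg y j) x
           + pd j (fun y => pd i K.ι y) x * (K.ρ x * K.dφg x j)) := by
    intro j
    have b1 : pd j (fun y => -(K.pbar y) * (if i = j then (1:ℝ) else 0) - K.TE y i j) x
        = pd j (fun y => -(K.pbar y) * (if i = j then (1:ℝ) else 0)) x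
          - pd j (fun y => K.TE y i j) x :=
      pd_sub ((D cpbar).neg.mul_const _) (D ((cgι i).mul (cρφg j))) j
    have b2 : pd j (fun y => -(K.pbar y) * (if i = j then (1:ℝ) else 0)) x
        = -(pd j K.pbar x) * (if i = j then (1:ℝ) else 0) := pd_neg_mul_const (D cpbar) _ j
    have b3 : pd j (fun y => K.TE y i j) x
        = pd i K.ι x * pd j (fun y => K.ρ y * K.dφg y j) x
          + pd j (fun y => pd i K.ι y) x * (K.ρ x * K.dφg x j) :=
      pd_mul (D (cgι i)) (D (cρφg j)) j
    rw [b1, b2, b3]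
  simp only [M1] at Emom
  simp only [Finset.sum_sub_distrib, mul_ite, mul_one, mul_zero, Finset.sum_ite_eq, Finset.mem_univ, if_true] at Emom
  rw [E4] at Emom
  rw [EC, E1, E2, C1, E3, hdiv3]
  rw [hdiv3] at Emom
  simp only [Fin.sum_univ_three] at Emom ⊢
  linear_combination K.ι x * Emom
    - ((pd 0 (fun y => K.v y i) x * K.v x 0 + pd 1 (fun y => K.v y i) x * K.v x 1
        + pd 2 (fun y => K.v y i) x * K.v x 2)
       + (pd 0 (fun y => pd i K.ι y) x * K.dφg x 0 + pd 1 (fun y => pd i K.ι y) x * K.dφg x 1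
        + pd 2 (fun y => pd i K.ι y) x * K.dφg x 2)) * hι1
    + K.dφg x 0 * hs0 + K.dφg x 1 * hs1 + K.dφg x 2 * hs2
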